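/- Let (G, δ) and (G', δ') be scalable groups endowed with compatible pseudodistances d and d' respectively, and let φ : G → G' be a morphism of scalable groups, i.e., a group homomorphism satisfying φ(δ_λ(x)) = δ'_λ(φ(x)) for all λ ∈ ℝ and x ∈ G. Then φ is continuous at the identity e of G if and only if φ is Lipschitz, i.e., there exists C > 0 such that d'(φ(x), φ(y)) ≤ C d(x, y) for all x, y ∈ G. -/

import Mathlib

theorem stmt7 {G G' : Type*} [Group G] [PseudoMetricSpace G] [Group G'] [PseudoMetricSpace G']
    (δ : ℝ → G → G) (δ' : ℝ → G' → G')
    (hmul : ∀ (l : ℝ) (x y : G), δ l (x * y) = δ l x * δ l y)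
    (h0 : ∀ x : G, δ 0 x = 1)
    (hcomp : ∀ (l m : ℝ) (x : G), δ l (δ m x) = δ (l * m) x)
    (hbij : ∀ l : ℝ, l ≠ 0 → Function.Bijective (δ l))
    (hmul' : ∀ (l : ℝ) (x y : G'), δ' l (x * y) = δ' l x * δ' l y)
    (h0' : ∀ x : G', δ' 0 x = 1)
    (hcomp' : ∀ (l m : ℝ) (x : G'), δ' l (δ' m x) = δ' (l * m) x)
    (hbij' : ∀ l : ℝ, l ≠ 0 → Function.Bijective (δ' l))
    (hleft : ∀ x y z : G, dist (x * y) (x * z) = dist y z)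
    (hdil : ∀ (l : ℝ) (x y : G), dist (δ l x) (δ l y) = |l| * dist x y)
    (hleft' : ∀ x y z : G', dist (x * y) (x * z) = dist y z)
    (hdil' : ∀ (l : ℝ) (x y : G'), dist (δ' l x) (δ' l y) = |l| * dist x y)
    (φ : G → G')
    (hφmul : ∀ x y : G, φ (x * y) = φ x * φ y)
    (hφdil : ∀ (l : ℝ) (x : G), φ (δ l x) = δ' l (φ x)) :
    ContinuousAt φ (1 : G) ↔
      ∃ C : ℝ, 0 < C ∧ ∀ x y : G, dist (φ x) (φ y) ≤ C * dist x y := by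
  have hφ1 : φ 1 = 1 := by
    have h := hφmul 1 1
    rw [one_mul] at h
    exact (right_eq_mul.mp h)
  have hδ1 : ∀ l : ℝ, δ l 1 = 1 := by
    intro l
    have h := hmul l 1 1
    rw [one_mul] at h
    exact (right_eq_mul.mp h)
  have hδ1' : ∀ l : ℝ, δ' l 1 = 1 := by
    intro l
    have h := hmul' l 1 1
    rw [one_mul] at h
    exact (right_eq_mul.mp h)
  have hdistG : ∀ x y : G, dist x y = dist (1 : G) (x⁻¹ * y) := by
    intro x y
    have := hleft x⁻¹ x y
    simpa using this.symm
  have hdistG' : ∀ x y : G', dist x y = dist (1 : G') (x⁻¹ * y) := by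
    intro x y
    have := hleft' x⁻¹ x y
    simpa using this.symm
  constructor
  · intro hc
    rw [Metric.continuousAt_iff] at hc
    obtain ⟨ε, hε, hball⟩ := hc 1 one_pos
    -- key scaling step
    have step : ∀ (z : G) (l : ℝ), 0 < l → l * dist z 1 < ε → l * dist (φ z) 1 < 1 := by
      intro z l hl hlt
      have hz : dist (δ l z) 1 < ε := by
        have h := hdil l z 1
        rw [hδ1, abs_of_pos hl] at h
        rw [h]; exact hlt
      have h2 := hball hz
      rw [hφ1, hφdil] at h2
      have h3 := hdil' l (φ z) 1
      rw [hδ1', abs_of_pos hl] at h3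
      rw [h3] at h2
      exact h2
    have key : ∀ z : G, dist (φ z) 1 ≤ (2 / ε) * dist z 1 := by
      intro z
      rcases eq_or_lt_of_le (dist_nonneg : (0:ℝ) ≤ dist z 1) with h | h
      · -- dist z 1 = 0 : show dist (φ z) 1 = 0
        have hz0 : dist (φ z) 1 ≤ 0 := by
          by_contra hpos
          push_neg at hpos
          have := step z (2 / dist (φ z) 1) (by positivity) (by
            rw [← h]; simpa using hε)
          rw [div_mul_cancel₀ _ (ne_of_gt hpos)] at this
          linarith
        have : dist (φ z) 1 = 0 := le_antisymm hz0 dist_nonneg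
        rw [this, ← h]
        simp
      · -- dist z 1 > 0
        have hl : 0 < ε / (2 * dist z 1) := by positivity
        have hlt : (ε / (2 * dist z 1)) * dist z 1 < ε := by
          rw [div_mul_eq_mul_div, mul_comm (2:ℝ) (dist z 1), ← div_div,
            mul_div_assoc, div_self (ne_of_gt h), mul_one]
          linarith
        have := step z _ hl hlt
        rw [div_mul_eq_mul_div, div_lt_one (by positivity)] at this
        have h2 : dist (φ z) 1 < (2 / ε) * dist z 1 := by
          rw [div_mul_eq_mul_div, lt_div_iff₀ hε]
          nlinarith [this]
        exact le_of_lt h2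
    refine ⟨2 / ε, by positivity, fun x y => ?_⟩
    have e1 : dist (φ x) (φ y) = dist (φ (x⁻¹ * y)) 1 := by
      have hinv : φ x⁻¹ = (φ x)⁻¹ := by
        have h := hφmul x⁻¹ x
        rw [inv_mul_cancel, hφ1] at h
        exact eq_inv_of_mul_eq_one_left h.symm
      rw [hdistG' (φ x) (φ y), dist_comm, hφmul, hinv]
    have e2 : dist x y = dist (x⁻¹ * y) 1 := by
      rw [hdistG x y, dist_comm]
    rw [e1, e2]
    exact key _
  · rintro ⟨C, hC, hLip⟩
    have : LipschitzWith ⟨C, hC.le⟩ φ :=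
      LipschitzWith.of_dist_le_mul (fun x y => by exact hLip x y)
    exact this.continuous.continuousAt
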